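/- There is no DFA over {a,b} with exactly 3 states that accepts all words in P = {a^3, a b a^3 b, a^2 b a^3 b} and rejects all words in N ⊇ {a, a^2, a^4, a^5, a b a, a b a^3}. More precisely: any 3-state DFA accepting a^3 and rejecting a, a^2, a^4, a^5 must have its states forming an a-cycle of length 3 with the initial state accepting, and then the constraints a b a^3 b accepted, a b a and a b a^3 rejected are jointly unsatisfiable. -/
import Mathlib

lemma four_distinct_card_le {σ : Type} [Fintype σ] (a b c d : σ)
    (hab : a ≠ b) (hac : a ≠ c) (had : a ≠ d) (hbc : b ≠ c) (hbd : b ≠ d)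
    (hcd : c ≠ d) : 4 ≤ Fintype.card σ := by
  classical
  have : ({a, b, c, d} : Finset σ).card = 4 := by
    rw [Finset.card_insert_of_notMem (by simp [hab, hac, had]),
      Finset.card_insert_of_notMem (by simp [hbc, hbd]),
      Finset.card_insert_of_notMem (by simp [hcd]), Finset.card_singleton]
  calc 4 = ({a, b, c, d} : Finset σ).card := this.symm
    _ ≤ Fintype.card σ := Finset.card_le_univ _

/-- Letter `a` is `false`, letter `b` is `true`. There is no 3-state DFA over `{a,b}`
accepting all of `{a³, a b a³ b, a² b a³ b}` and rejecting all of
`{a, a², a⁴, a⁵, a b a, a b a³}`. -/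
theorem no_three_state_dfa_counterexample :
    ¬ ∃ (σ : Type) (_ : Fintype σ) (A : DFA Bool σ),
      Fintype.card σ = 3 ∧
      List.replicate 3 false ∈ A.accepts ∧
      ([false] ++ [true] ++ List.replicate 3 false ++ [true]) ∈ A.accepts ∧
      (List.replicate 2 false ++ [true] ++ List.replicate 3 false ++ [true]) ∈ A.accepts ∧
      [false] ∉ A.accepts ∧
      List.replicate 2 false ∉ A.accepts ∧
      List.replicate 4 false ∉ A.accepts ∧
      List.replicate 5 false ∉ A.accepts ∧
      [false, true, false] ∉ A.accepts ∧
      [false, true, false, false, false] ∉ A.accepts := by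
  rintro ⟨σ, inst, A, hcard, h3, haba3b, -, h1, h2, h4, h5, haba, haba3⟩
  classical
  simp only [DFA.mem_accepts, DFA.eval, DFA.evalFrom, List.foldl, List.replicate,
    List.append_assoc, List.cons_append, List.nil_append] at h3 haba3b h1 h2 h4 h5 haba haba3
  set s1 := A.step A.start false with hs1
  set s2 := A.step s1 false with hs2
  set s3 := A.step s2 false with hs3
  set s4 := A.step s3 false with hs4
  set s5 := A.step s4 false with hs5
  set t := A.step s1 true with ht
  set u1 := A.step t false with hu1
  set u2 := A.step u1 false with hu2
  set u3 := A.step u2 false with hu3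
  have h13 : s1 ≠ s3 := fun h => h1 (h ▸ h3)
  have h23 : s2 ≠ s3 := fun h => h2 (h ▸ h3)
  have h12 : s1 ≠ s2 := by
    intro h
    exact h23 (by rw [hs3, ← h, ← hs2, h])
  have h43 : s4 ≠ s3 := fun h => h4 (h ▸ h3)
  have hall : ∀ x : σ, x = s1 ∨ x = s2 ∨ x = s3 := by
    intro x
    by_contra hx
    push_neg at hx
    obtain ⟨hx1, hx2, hx3⟩ := hx
    have := four_distinct_card_le s1 s2 s3 x h12 h13 (Ne.symm hx1) h23 (Ne.symm hx2)
      (Ne.symm hx3)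
    omega
  have h41 : s4 = s1 := by
    rcases hall s4 with h | h | h
    · exact h
    · exfalso; apply h5; rw [hs5, h, ← hs3]; exact h3
    · exact absurd h h43
  rcases hall t with h | h | h
  · -- t = s1 : u3 = s4 = s1, so haba3b gives step s1 true = t = s1 ∈ accept
    have hu : u3 = s1 := by rw [hu3, hu2, hu1, h, ← hs2, ← hs3, ← hs4, h41]
    rw [hu, ← ht, h] at haba3b
    exact h1 haba3b
  · -- t = s2 : u1 = s3 ∈ accept contradicts haba
    apply haba
    rw [hu1, h, ← hs3]
    exact h3
  · -- t = s3 : u3 = s3 contradicts haba3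
    apply haba3
    have hu : u3 = s3 := by rw [hu3, hu2, hu1, h, ← hs4, h41, ← hs2, ← hs3]
    rw [hu]
    exact h3
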